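/- Under the hypotheses of the previous statement (n ≥ 5, sectional curvatures K(i,j) ≥ (1/2)(c + (n/4)H²)), if moreover equality Θ_p = p(n-p)c holds for some p with 2 ≤ p ≤ n-2, then H = 0 and K(i,j) = c/2 for all 1 ≤ i ≤ p and p+1 ≤ j ≤ n. -/

import Mathlib

open scoped RealInnerProductSpace
open Finset

set_option maxHeartbeats 1000000 in
/-- Algebraic core of Proposition 2.2(ii): under the pinching
`K(i,j) ≥ (1/2)(c + (n/4)H²)`, if equality `Θ_p = p(n-p)c` holds for some
`2 ≤ p ≤ n-2`, then `H = 0` and `K(i,j) = c/2` for all `i ≤ p < j`. -/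
theorem stmt_4 (n m : ℕ) (hn : 5 ≤ n) (hm : 1 ≤ m) (c : ℝ) (hc : 0 ≤ c)
    (α : Fin n → Fin n → EuclideanSpace ℝ (Fin m))
    (hsymm : ∀ i j, α i j = α j i)
    (H : ℝ) (hH : H = (1 / (n : ℝ)) * ‖∑ i, α i i‖)
    (K : Fin n → Fin n → ℝ)
    (hK : ∀ i j, K i j = c + ⟪α i i, α j j⟫ - ‖α i j‖^2)
    (hpinch : ∀ i j : Fin n, i < j → (1/2) * (c + ((n : ℝ)/4) * H^2) ≤ K i j)
    (p : ℕ) (hp : 2 ≤ p) (hp' : p ≤ n - 2)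
    (heq : ∑ i ∈ univ.filter (fun i : Fin n => (i : ℕ) < p),
      ∑ j ∈ univ.filter (fun j : Fin n => p ≤ (j : ℕ)),
        (2 * ‖α i j‖^2 - ⟪α i i, α j j⟫)
      = (p : ℝ) * ((n : ℝ) - (p : ℝ)) * c) :
    H = 0 ∧ ∀ i j : Fin n, (i : ℕ) < p → p ≤ (j : ℕ) → K i j = c / 2 := by
  have hpn : p < n := by omega
  set q : Fin n := ⟨p, hpn⟩ with hq
  have hT1 : univ.filter (fun i : Fin n => (i : ℕ) < p) = Finset.Iio q := by
    ext i; simp [Fin.lt_def, hq]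
  have hT2 : univ.filter (fun j : Fin n => p ≤ (j : ℕ)) = Finset.Ici q := by
    ext j; simp [Fin.le_def, hq]
  set T1 := Finset.Iio q with hT1def
  set T2 := Finset.Ici q with hT2def
  rw [hT1, hT2] at heq
  have hc1 : (T1.card : ℝ) = (p : ℝ) := by
    rw [hT1def, Fin.card_Iio]
  have hc2 : (T2.card : ℝ) = (n : ℝ) - (p : ℝ) := by
    rw [hT2def, Fin.card_Ici]
    push_cast [Nat.cast_sub hpn.le]
    exact Nat.cast_sub hpn.le
  set A : EuclideanSpace ℝ (Fin m) := ∑ i ∈ T1, α i i with hA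
  set B : EuclideanSpace ℝ (Fin m) := ∑ j ∈ T2, α j j with hB
  have hABsum : A + B = ∑ i, α i i := by
    rw [hA, hB, ← hT1, ← hT2]
    have := Finset.sum_filter_add_sum_filter_not univ
      (fun i : Fin n => (i : ℕ) < p) (fun i => α i i)
    rw [← this]
    congr 1
    apply Finset.sum_congr _ (fun _ _ => rfl)
    ext j; simp [not_lt]
  have hInner : ∑ i ∈ T1, ∑ j ∈ T2, ⟪α i i, α j j⟫ = ⟪A, B⟫ := by
    rw [hA, hB, sum_inner]
    exact Finset.sum_congr rfl fun i _ => (inner_sum _ _ _).symm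
  have hnpos : (0 : ℝ) < n := by positivity
  have hnorm : ‖A + B‖ = (n : ℝ) * H := by
    rw [hABsum, hH]; field_simp
  set S : ℝ := ∑ i ∈ T1, ∑ j ∈ T2, K i j with hS
  -- rewrite heq
  have hsplit : ∑ i ∈ T1, ∑ j ∈ T2, (2 * ‖α i j‖^2 - ⟪α i i, α j j⟫)
      = 2 * c * ((p : ℝ) * ((n : ℝ) - (p : ℝ))) + ⟪A, B⟫ - 2 * S := by
    have : ∀ i ∈ T1, ∑ j ∈ T2, (2 * ‖α i j‖^2 - ⟪α i i, α j j⟫)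
        = ∑ j ∈ T2, (2 * c + ⟪α i i, α j j⟫ - 2 * K i j) := by
      intro i _
      refine Finset.sum_congr rfl fun j _ => ?_
      rw [hK i j]; ring
    rw [Finset.sum_congr rfl this]
    simp only [Finset.sum_sub_distrib, Finset.sum_add_distrib, Finset.sum_const,
      nsmul_eq_mul, hInner, hS]
    simp only [← Finset.mul_sum]
    rw [hc1, hc2]
    ring
  have h2S : 2 * S = c * ((p : ℝ) * ((n : ℝ) - (p : ℝ))) + ⟪A, B⟫ := by
    rw [hsplit] at heq; linarith
  -- lower bound for S
  have hij : ∀ i ∈ T1, ∀ j ∈ T2, i < j := by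
    intro i hi j hj
    rw [hT1def, Finset.mem_Iio] at hi
    rw [hT2def, Finset.mem_Ici] at hj
    exact lt_of_lt_of_le hi hj
  have hSlb : (p : ℝ) * ((n : ℝ) - (p : ℝ)) * ((1/2) * (c + ((n : ℝ)/4) * H^2)) ≤ S := by
    have : ∑ i ∈ T1, ∑ j ∈ T2, ((1/2) * (c + ((n : ℝ)/4) * H^2)) ≤ S := by
      refine Finset.sum_le_sum fun i hi => Finset.sum_le_sum fun j hj => ?_
      exact hpinch i j (hij i hi j hj)
    simpa [Finset.sum_const, nsmul_eq_mul, hc1, hc2, mul_assoc] using this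
  -- inner product bound
  have hIB : ⟪A, B⟫ ≤ ((n : ℝ) * H)^2 / 4 := by
    have h1 := real_inner_le_norm A B
    have h2 := norm_add_sq_real A B
    have h3 := sq_nonneg (‖A‖ - ‖B‖)
    have h4 : ‖A + B‖^2 = ((n : ℝ) * H)^2 := by rw [hnorm]
    nlinarith [h1, h2, h3, h4]
  set P : ℝ := (p : ℝ) * ((n : ℝ) - (p : ℝ)) with hP
  have hgt : (n : ℝ) < P := by
    rw [hP]
    have h1 : (2 : ℝ) ≤ (p : ℝ) := by exact_mod_cast hp
    have h2 : (p : ℝ) + 2 ≤ (n : ℝ) := by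
      have : p + 2 ≤ n := by omega
      exact_mod_cast this
    have h5 : (5 : ℝ) ≤ (n : ℝ) := by exact_mod_cast hn
    nlinarith [mul_nonneg (sub_nonneg.mpr h1) (by linarith : (0:ℝ) ≤ (n : ℝ) - (p:ℝ) - 2)]
  have hH0 : H = 0 := by
    have hH2 : H ^ 2 ≤ 0 := by
      nlinarith [hSlb, h2S, hIB, mul_pos hnpos (sub_pos.mpr hgt)]
    have h0 : H ^ 2 = 0 := le_antisymm hH2 (sq_nonneg H)
    exact sq_eq_zero_iff.mp h0
  refine ⟨hH0, ?_⟩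
  -- A + B = 0
  have hAB0 : A + B = 0 := by
    have : ‖A + B‖ = 0 := by rw [hnorm, hH0, mul_zero]
    exact norm_eq_zero.mp this
  have hABneg : ⟪A, B⟫ ≤ 0 := by
    have hBA : B = -A := by
      rw [eq_neg_iff_add_eq_zero, add_comm]; exact hAB0
    rw [hBA, inner_neg_right, real_inner_self_eq_norm_sq]
    simp [sq_nonneg]
  -- sum equality forces each term
  have hpinch' : ∀ i ∈ T1, ∀ j ∈ T2, c / 2 ≤ K i j := by
    intro i hi j hj
    have := hpinch i j (hij i hi j hj)
    rw [hH0] at this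
    linarith [this]
  have hSub : S ≤ (p : ℝ) * ((n : ℝ) - (p : ℝ)) * (c / 2) := by
    nlinarith [h2S, hABneg]
  have hzero : ∑ x ∈ T1 ×ˢ T2, (K x.1 x.2 - c / 2) = 0 := by
    rw [Finset.sum_product]
    have hval : ∑ i ∈ T1, ∑ j ∈ T2, (K i j - c / 2)
        = S - (p : ℝ) * ((n : ℝ) - (p : ℝ)) * (c / 2) := by
      simp only [Finset.sum_sub_distrib, Finset.sum_const, nsmul_eq_mul, hS, hc1, hc2]
      ring
    rw [hval]
    have hSlb' : (p : ℝ) * ((n : ℝ) - (p : ℝ)) * (c / 2) ≤ S := by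
      have := hSlb
      rw [hH0] at this
      nlinarith [this]
    linarith
  have hall := (Finset.sum_eq_zero_iff_of_nonneg (fun x hx => by
    rw [Finset.mem_product] at hx
    have := hpinch' x.1 hx.1 x.2 hx.2
    linarith)).mp hzero
  intro i j hi hj
  have hmem : (i, j) ∈ T1 ×ˢ T2 := by
    rw [Finset.mem_product, hT1def, hT2def, Finset.mem_Iio, Finset.mem_Ici]
    exact ⟨by simpa [Fin.lt_def, hq] using hi, by simpa [Fin.le_def, hq] using hj⟩
  have := hall (i, j) hmem
  linarith [this]
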